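/- Let V be a finite-dimensional complex vector space, N, E, R endomorphisms of V, and h a nonzero complex number. Suppose [N, R] = −N and [E, R] = (h−1)E. Define matrix-valued functions on G_m × G_m (coordinates t, z): A(t,z) = (N + tE)/(tz) and B(t,z) = −h(N + tE)/z² + R/z. Then ∂_z A − ∂_t B = [A, B], i.e., the connection d + A dt + B dz is flat. -/

import Mathlib

/-- Integrability of the rescaled Frenkel–Gross connection: with `[N,R] = -N`,
`[E,R] = (h-1)E`, `A(t,z) = (N + tE)/(tz)`, `B(t,z) = -h(N + tE)/z² + R/z`, one has
`∂_z A - ∂_t B = [A, B]` on `𝔾_m × 𝔾_m`. -/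
theorem stmt3 {V : Type*} [NormedAddCommGroup V] [NormedSpace ℂ V] [FiniteDimensional ℂ V]
    (N E R : V →L[ℂ] V) (h : ℂ) (hh : h ≠ 0)
    (hNR : N * R - R * N = -N)
    (hER : E * R - R * E = (h - 1) • E)
    (A B : ℂ → ℂ → (V →L[ℂ] V))
    (hA : ∀ t z, A t z = (t * z)⁻¹ • (N + t • E))
    (hB : ∀ t z, B t z = (-(h / z ^ 2)) • (N + t • E) + z⁻¹ • R)
    (t z : ℂ) (ht : t ≠ 0) (hz : z ≠ 0) :
    deriv (fun z' => A t z') z - deriv (fun t' => B t' z) t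
      = A t z * B t z - B t z * A t z := by
  have htz : t * z ≠ 0 := mul_ne_zero ht hz
  have hdA : HasDerivAt (fun z' => A t z') ((-t / (t * z) ^ 2) • (N + t • E)) z := by
    have h1 : HasDerivAt (fun z' : ℂ => t * z') t z := by
      simpa using (hasDerivAt_id z).const_mul t
    have h2 := (h1.inv htz).smul_const (N + t • E)
    simpa only [hA, Pi.inv_apply] using h2
  have hdB : HasDerivAt (fun t' => B t' z) ((-(h / z ^ 2)) • E) t := by
    have h1 : HasDerivAt (fun t' : ℂ => t' • E) E t := by
      simpa using (hasDerivAt_id t).smul_const E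
    have h2 := ((h1.const_add N).const_smul (-(h / z ^ 2))).add_const (z⁻¹ • R)
    simpa only [hB, smul_smul, Pi.smul_apply] using h2
  rw [hdA.deriv, hdB.deriv, hA, hB]
  have expand : ∀ (M : V →L[ℂ] V) (c d e : ℂ),
      c • M * (d • M + e • R) - (d • M + e • R) * (c • M)
        = (c * e) • (M * R - R * M) := by
    intro M c d e
    simp only [mul_add, add_mul, smul_mul_assoc, mul_smul_comm, smul_smul, smul_sub]
    module
  rw [expand]
  have comm : (N + t • E) * R - R * (N + t • E) = -N + (t * (h - 1)) • E := by
    have : (N + t • E) * R - R * (N + t • E)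
        = (N * R - R * N) + t • (E * R - R * E) := by
      simp only [add_mul, mul_add, smul_mul_assoc, mul_smul_comm, smul_sub]
      abel
    rw [this, hNR, hER, smul_smul]
  rw [comm]
  match_scalars
  · field_simp
  · field_simp
    ring
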